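/- For a symmetric positive definite matrix Σ and fixed A, B, B₁, the following are equivalent: (i) there exists X ∈ ℝ^{n×m} such that AΣ + ΣA' + B₁B₁' + BX' + XB' = 0; (ii) rank[[AΣ+ΣA'+B₁B₁', B],[B, 0]] = rank[[0, B],[B, 0]] (as block 2n×(n+m) by appropriate blocks matrices). -/

import Mathlib

open Matrix

lemma ct_eq {a b : Type*} (M : Matrix a b ℝ) : Mᴴ = Mᵀ :=
  Matrix.ext fun _ _ => star_trivial _

lemma exists_proj {n m : ℕ} (B : Matrix (Fin n) (Fin m) ℝ) :
    ∃ (Q : Matrix (Fin n) (Fin n) ℝ) (Y : Matrix (Fin m) (Fin n) ℝ),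
      Q = B * Y ∧ Qᵀ = Q ∧ Q * B = B := by
  classical
  set G : Matrix (Fin m) (Fin m) ℝ := Bᴴ * B with hGdef
  have hG : G.IsHermitian := isHermitian_conjTranspose_mul_self B
  set U : Matrix (Fin m) (Fin m) ℝ := (hG.eigenvectorUnitary : Matrix (Fin m) (Fin m) ℝ) with hU
  have hUU : star U * U = 1 := (Matrix.mem_unitaryGroup_iff').mp (hG.eigenvectorUnitary).2
  set d : Fin m → ℝ := hG.eigenvalues with hd
  have hspec : G = U * diagonal d * star U := by
    have := hG.spectral_theorem
    simpa using this
  set H : Matrix (Fin m) (Fin m) ℝ := U * diagonal (fun i => (d i)⁻¹) * star U with hH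
  have hGHG : G * H * G = G := by
    rw [hspec, hH]
    have h1 : ∀ (D₁ D₂ : Matrix (Fin m) (Fin m) ℝ),
        (U * D₁ * star U) * (U * D₂ * star U) = U * (D₁ * D₂) * star U := by
      intro D₁ D₂
      calc (U * D₁ * star U) * (U * D₂ * star U)
          = U * (D₁ * ((star U * U) * D₂)) * star U := by
            simp only [Matrix.mul_assoc]
        _ = U * (D₁ * D₂) * star U := by rw [hUU, Matrix.one_mul]
    rw [h1, h1]
    congr 1
    congr 1
    rw [diagonal_mul_diagonal, diagonal_mul_diagonal]
    congr 1
    funext i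
    rcases eq_or_ne (d i) 0 with h | h
    · simp [h]
    · field_simp
  have hHherm : Hᴴ = H := by
    rw [hH]
    simp [conjTranspose_mul, diagonal_conjTranspose, Matrix.mul_assoc,
      star_eq_conjTranspose, Function.comp_def]
  have hGherm : Gᴴ = G := hG
  -- key : B * (H * G) = B
  have hkey : B * (H * G) = B := by
    have hE : (B * (H * G) - B)ᴴ * (B * (H * G) - B) = 0 := by
      have expand : (B * (H * G) - B)ᴴ * (B * (H * G) - B)
          = (H*G)ᴴ * G * (H * G) - (H*G)ᴴ * G - G * (H*G) + G := by
        rw [conjTranspose_sub, conjTranspose_mul, Matrix.sub_mul, Matrix.mul_sub,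
          Matrix.mul_sub]
        simp only [Matrix.mul_assoc, hGdef]
        abel
      rw [expand]
      have hHGt : (H*G)ᴴ = G * H := by
        rw [conjTranspose_mul, hHherm, hGherm]
      rw [hHGt]
      have h2 : G * H * (G * (H * G)) = G := by
        rw [← Matrix.mul_assoc, ← Matrix.mul_assoc]
        rw [hGHG]
        rw [← Matrix.mul_assoc] at hGHG ⊢
        exact hGHG
      simp only [← Matrix.mul_assoc]
      rw [hGHG, hGHG]
      abel
    exact sub_eq_zero.mp (conjTranspose_mul_self_eq_zero.mp hE)
  refine ⟨B * (H * Bᴴ), H * Bᴴ, rfl, ?_, ?_⟩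
  · rw [← ct_eq]
    calc (B * (H * Bᴴ))ᴴ = (H * Bᴴ)ᴴ * Bᴴ := by rw [conjTranspose_mul]
      _ = (B * Hᴴ) * Bᴴ := by rw [conjTranspose_mul, conjTranspose_conjTranspose]
      _ = B * (H * Bᴴ) := by rw [hHherm, Matrix.mul_assoc]
  · calc B * (H * Bᴴ) * B = B * (H * G) := by rw [hGdef, Matrix.mul_assoc, Matrix.mul_assoc]
      _ = B := hkey


lemma rank_congr_blocks {n m : ℕ} (B : Matrix (Fin n) (Fin m) ℝ)
    (C₁ C₂ : Matrix (Fin n) (Fin n) ℝ) (Z : Matrix (Fin n) (Fin m) ℝ)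
    (h : C₁ = C₂ + B * Zᵀ + Z * Bᵀ) :
    (fromBlocks C₁ B Bᵀ 0).rank = (fromBlocks C₂ B Bᵀ 0).rank := by
  classical
  set L : Matrix (Fin n ⊕ Fin m) (Fin n ⊕ Fin m) ℝ := fromBlocks 1 Z 0 1 with hL
  have key : fromBlocks C₁ B Bᵀ 0 = L * fromBlocks C₂ B Bᵀ 0 * Lᵀ := by
    rw [hL, fromBlocks_transpose, fromBlocks_multiply, fromBlocks_multiply]
    simp only [Matrix.one_mul, Matrix.mul_one, Matrix.zero_mul, Matrix.mul_zero,
      add_zero, zero_add, transpose_one, transpose_zero]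
    rw [h]
    congr 1
    · abel
  have hdetL : IsUnit L.det := by
    rw [hL, det_fromBlocks_zero₂₁]
    simp
  have hdetLT : IsUnit (Lᵀ).det := by rwa [det_transpose]
  rw [key, rank_mul_eq_left_of_isUnit_det _ _ hdetLT,
    rank_mul_eq_right_of_isUnit_det _ _ hdetL]

/-- Solvability of AΣ + ΣA' + B₁B₁' + BX' + XB' = 0 is equivalent to the rank condition
rank [[AΣ+ΣA'+B₁B₁', B],[B', 0]] = rank [[0, B],[B', 0]]. -/
theorem stmt_6 {n m p : ℕ}
    (A : Matrix (Fin n) (Fin n) ℝ) (B : Matrix (Fin n) (Fin m) ℝ)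
    (B₁ : Matrix (Fin n) (Fin p) ℝ) (S : Matrix (Fin n) (Fin n) ℝ)
    (hS : S.PosDef) :
    (∃ X : Matrix (Fin n) (Fin m) ℝ,
        A * S + S * Aᵀ + B₁ * B₁ᵀ + B * Xᵀ + X * Bᵀ = 0) ↔
    (Matrix.fromBlocks (A * S + S * Aᵀ + B₁ * B₁ᵀ) B Bᵀ 0).rank
      = (Matrix.fromBlocks (0 : Matrix (Fin n) (Fin n) ℝ) B Bᵀ 0).rank := by
  classical
  set C : Matrix (Fin n) (Fin n) ℝ := A * S + S * Aᵀ + B₁ * B₁ᵀ with hC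
  have hSsym : Sᵀ = S := by rw [← ct_eq]; exact hS.isHermitian
  have hCsym : Cᵀ = C := by
    rw [hC]
    simp only [transpose_add, transpose_mul, transpose_transpose, hSsym]
    abel
  constructor
  · rintro ⟨X, hX⟩
    apply rank_congr_blocks B C 0 (-X)
    rw [transpose_neg, Matrix.mul_neg, Matrix.neg_mul]
    have hC' : C = -(B * Xᵀ + X * Bᵀ) := by
      rw [add_assoc] at hX
      exact eq_neg_of_add_eq_zero_left hX
    rw [hC']
    abel
  · intro hrank
    obtain ⟨Q, Y, hQY, hQsym, hQB⟩ := exists_proj B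
    have hQQ : Q * Q = Q := by rw [hQY, ← Matrix.mul_assoc]; rw [← hQY, hQB, ← hQY]
    set P : Matrix (Fin n) (Fin n) ℝ := 1 - Q with hP
    set D : Matrix (Fin n) (Fin n) ℝ := P * C * P with hD
    set X₀ : Matrix (Fin n) (Fin m) ℝ := C * Yᵀ - (2⁻¹ : ℝ) • (Q * C * Yᵀ) with hX₀
    have hYB : Yᵀ * Bᵀ = Q := by rw [← transpose_mul, ← hQY, hQsym]
    have hBX : B * X₀ᵀ = Q * C - (2⁻¹ : ℝ) • (Q * C * Q) := by
      have ht1 : (C * Yᵀ)ᵀ = Y * C := by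
        rw [transpose_mul, transpose_transpose, hCsym]
      have ht2 : (Q * C * Yᵀ)ᵀ = Y * (Cᵀ * Qᵀ) := by
        rw [transpose_mul, transpose_mul, transpose_transpose]
      rw [hX₀, transpose_sub, transpose_smul, ht1, ht2, hCsym, hQsym,
        Matrix.mul_sub, Matrix.mul_smul]
      simp only [← Matrix.mul_assoc]
      rw [← hQY]
    have hXB : X₀ * Bᵀ = C * Q - (2⁻¹ : ℝ) • (Q * C * Q) := by
      rw [hX₀, Matrix.sub_mul, Matrix.smul_mul]
      simp only [Matrix.mul_assoc]
      rw [hYB]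
    have hdecomp : C = D + B * X₀ᵀ + X₀ * Bᵀ := by
      have expand : D = C - Q * C - C * Q + Q * C * Q := by
        rw [hD, hP]; noncomm_ring
      rw [hBX, hXB, expand]
      module
    have hPB : P * B = 0 := by rw [hP, Matrix.sub_mul, Matrix.one_mul, hQB, sub_self]
    have hBP : Bᵀ * P = 0 := by
      rw [hP, Matrix.mul_sub, Matrix.mul_one]
      rw [← hQsym, ← transpose_mul, hQB, sub_self]
    have hDB : D * B = 0 := by
      rw [hD, Matrix.mul_assoc, hPB, Matrix.mul_zero]
    have hBD : Bᵀ * D = 0 := by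
      rw [hD, ← Matrix.mul_assoc, ← Matrix.mul_assoc, hBP, Matrix.zero_mul, Matrix.zero_mul]
    -- rank equality transported to D
    have hrank' : (fromBlocks D B Bᵀ 0).rank = (fromBlocks (0:Matrix (Fin n) (Fin n) ℝ) B Bᵀ 0).rank := by
      rw [← rank_congr_blocks B C D X₀ hdecomp]; exact hrank
    -- kernels
    set M' := fromBlocks D B Bᵀ (0 : Matrix (Fin m) (Fin m) ℝ) with hM'
    set N := fromBlocks (0 : Matrix (Fin n) (Fin n) ℝ) B Bᵀ (0 : Matrix (Fin m) (Fin m) ℝ) with hN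
    have hkerle : LinearMap.ker M'.mulVecLin ≤ LinearMap.ker N.mulVecLin := by
      intro v hv
      rw [LinearMap.mem_ker, mulVecLin_apply, hM', fromBlocks_mulVec] at hv
      have h1 : D *ᵥ (v ∘ Sum.inl) + B *ᵥ (v ∘ Sum.inr) = 0 := by
        funext i; exact congr_fun hv (Sum.inl i)
      have h2 : Bᵀ *ᵥ (v ∘ Sum.inl) + (0 : Matrix (Fin m) (Fin m) ℝ) *ᵥ (v ∘ Sum.inr) = 0 := by
        funext i; exact congr_fun hv (Sum.inr i)
      rw [zero_mulVec, add_zero] at h2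
      have h3 : (Bᵀ * B) *ᵥ (v ∘ Sum.inr) = 0 := by
        have := congrArg (fun w => Bᵀ *ᵥ w) h1
        simpa [mulVec_add, mulVec_mulVec, hBD, mulVec_zero, zero_mulVec] using this
      have h4 : B *ᵥ (v ∘ Sum.inr) = 0 := by
        have : (Bᴴ * B) *ᵥ (v ∘ Sum.inr) = 0 := by rwa [ct_eq]
        exact (conjTranspose_mul_self_mulVec_eq_zero B _).mp this
      rw [LinearMap.mem_ker, mulVecLin_apply, hN, fromBlocks_mulVec]
      funext i
      cases i with
      | inl i => simp [h4, zero_mulVec]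
      | inr i => simp [h2, zero_mulVec]
    have hfr : Module.finrank ℝ (LinearMap.ker M'.mulVecLin) =
        Module.finrank ℝ (LinearMap.ker N.mulVecLin) := by
      have e1 := LinearMap.finrank_range_add_finrank_ker M'.mulVecLin
      have e2 := LinearMap.finrank_range_add_finrank_ker N.mulVecLin
      have : M'.rank = N.rank := hrank'
      rw [Matrix.rank, Matrix.rank] at this
      linarith [e1, e2, this]
    have hkereq : LinearMap.ker M'.mulVecLin = LinearMap.ker N.mulVecLin :=
      Submodule.eq_of_le_of_finrank_eq hkerle hfr
    have hDx : ∀ x : Fin n → ℝ, Bᵀ *ᵥ x = 0 → D *ᵥ x = 0 := by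
      intro x hx
      have hvN : Sum.elim x (0 : Fin m → ℝ) ∈ LinearMap.ker N.mulVecLin := by
        rw [LinearMap.mem_ker, mulVecLin_apply, hN, fromBlocks_mulVec]
        funext i
        cases i with
        | inl i => simp [mulVec_zero, zero_mulVec]
        | inr i => simpa [mulVec_zero, zero_mulVec] using congr_fun hx i
      rw [← hkereq, LinearMap.mem_ker, mulVecLin_apply, hM', fromBlocks_mulVec] at hvN
      have := congr_fun hvN
      funext i
      have hi := this (Sum.inl i)
      simpa [mulVec_zero] using hi
    have hDP : D * P = 0 := by
      ext i j
      have : (D * P) *ᵥ Pi.single j 1 = 0 := by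
        rw [← mulVec_mulVec]
        apply hDx
        rw [mulVec_mulVec, hBP, zero_mulVec]
      have h5 : (D * P) i j * 1 = 0 := by
        simpa [mulVec_single] using congr_fun this i
      simpa using h5
    have hPQ : P * Q = 0 := by
      rw [hP, Matrix.sub_mul, Matrix.one_mul, hQQ, sub_self]
    have hDQ : D * Q = 0 := by
      rw [hD, Matrix.mul_assoc, hPQ, Matrix.mul_zero]
    have hD0 : D = 0 := by
      have : D * (Q + P) = 0 := by rw [Matrix.mul_add, hDQ, hDP, add_zero]
      rwa [hP, add_sub_cancel, Matrix.mul_one] at this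
    refine ⟨-X₀, ?_⟩
    rw [transpose_neg, Matrix.mul_neg, Matrix.neg_mul]
    rw [hdecomp, hD0]
    abel
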